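/- For k ≥ 1 and 0 ≤ m ≤ k, the families of coloring sets D_{j,m,k} satisfy: for m ≥ 1, #D_{j,m,k+1} = #D_{j,m-1,k} + #D_{j-1,m,k} + #D_{j,m,k} + #D_{j-1,m+1,k}, with the convention #D_{j,m,k} = 0 if j < 0 or j > k-m. -/

import Mathlib

open Finset in
/-- The number of boolean functions on `Fin k` taking the value `t` exactly `n` times. -/
lemma count_bool (k n : ℕ) (t : Bool) :
    (univ.filter (fun c : Fin k → Bool => (univ.filter fun x => c x = t).card = n)).card
      = k.choose n := by
  have h := Finset.card_powersetCard n (Finset.univ : Finset (Fin k))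
  rw [Finset.card_univ, Fintype.card_fin] at h
  rw [← h]
  apply Finset.card_bij (fun c _ => univ.filter (fun x => c x = t))
  · intro c hc
    simp only [Finset.coe_filter, Set.mem_setOf_eq, Finset.mem_filter, Finset.mem_univ, true_and] at hc
    simp [Finset.mem_powersetCard, hc]
  · intro c1 h1 c2 h2 he
    funext x
    by_cases h : c1 x = t
    · have : x ∈ univ.filter (fun x => c1 x = t) := by simp [h]
      rw [he] at this
      simp only [Finset.mem_filter] at this
      rw [h, this.2]
    · have : x ∉ univ.filter (fun x => c2 x = t) := by
        rw [← he]; simp [h]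
      simp only [Finset.mem_filter, Finset.mem_univ, true_and] at this
      revert h this
      cases c1 x <;> cases c2 x <;> cases t <;> simp
  · intro s hs
    simp only [Finset.mem_powersetCard] at hs
    refine ⟨fun x => if x ∈ s then t else !t, ?_, ?_⟩
    · simp only [Finset.mem_filter, Finset.mem_univ, true_and]
      rw [← hs.2]
      congr 1
      ext x
      by_cases h : x ∈ s <;> simp [h]
    · ext x
      by_cases h : x ∈ s <;> simp [h]

open Finset in
lemma count_odd (k : ℕ) (c : Fin (2 * k) → Bool) (t : Bool) :
    (univ.filter fun x : Fin (2 * k) => (x.val + 1) % 2 = 1 ∧ c x = t).card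
      = (univ.filter fun b : Fin k => c ⟨2 * b.val, by omega⟩ = t).card := by
  apply Finset.card_nbij' (fun x => ⟨x.val / 2, by have := x.isLt; omega⟩)
    (fun b => ⟨2 * b.val, by have := b.isLt; omega⟩)
  · intro x hx
    simp only [Finset.coe_filter, Set.mem_setOf_eq, Finset.mem_filter, Finset.mem_univ, true_and] at hx ⊢
    have hx2 : (⟨2 * (x.val / 2), by have := x.isLt; omega⟩ : Fin (2 * k)) = x := by
      apply Fin.ext; simp only; omega
    rw [hx2]; exact hx.2
  · intro b hb
    simp only [Finset.coe_filter, Set.mem_setOf_eq, Finset.mem_filter, Finset.mem_univ, true_and] at hb ⊢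
    exact ⟨by omega, hb⟩
  · intro x hx
    simp only [Finset.coe_filter, Set.mem_setOf_eq, Finset.mem_filter, Finset.mem_univ, true_and] at hx
    apply Fin.ext; simp only; omega
  · intro b hb
    apply Fin.ext; simp only; omega

open Finset in
lemma count_even (k : ℕ) (c : Fin (2 * k) → Bool) (t : Bool) :
    (univ.filter fun x : Fin (2 * k) => (x.val + 1) % 2 = 0 ∧ c x = t).card
      = (univ.filter fun b : Fin k => c ⟨2 * b.val + 1, by omega⟩ = t).card := by
  apply Finset.card_nbij' (fun x => ⟨x.val / 2, by have := x.isLt; omega⟩)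
    (fun b => ⟨2 * b.val + 1, by have := b.isLt; omega⟩)
  · intro x hx
    simp only [Finset.coe_filter, Set.mem_setOf_eq, Finset.mem_filter, Finset.mem_univ, true_and] at hx ⊢
    have hx2 : (⟨2 * (x.val / 2) + 1, by have := x.isLt; omega⟩ : Fin (2 * k)) = x := by
      apply Fin.ext; simp only; omega
    rw [hx2]; exact hx.2
  · intro b hb
    simp only [Finset.coe_filter, Set.mem_setOf_eq, Finset.mem_filter, Finset.mem_univ, true_and] at hb ⊢
    exact ⟨by omega, hb⟩
  · intro x hx
    simp only [Finset.coe_filter, Set.mem_setOf_eq, Finset.mem_filter, Finset.mem_univ, true_and] at hx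
    apply Fin.ext; simp only; omega
  · intro b hb
    apply Fin.ext; simp only; omega

/-- Glue two colorings of `Fin k` (odd and even positions) into one of `Fin (2k)`. -/
def glue (k : ℕ) (p : (Fin k → Bool) × (Fin k → Bool)) (x : Fin (2 * k)) : Bool :=
  if x.val % 2 = 0 then p.1 ⟨x.val / 2, by have := x.isLt; omega⟩
  else p.2 ⟨x.val / 2, by have := x.isLt; omega⟩

lemma glue_even (k : ℕ) (p : (Fin k → Bool) × (Fin k → Bool)) (b : Fin k)
    (h : 2 * b.val < 2 * k) : glue k p ⟨2 * b.val, h⟩ = p.1 b := by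
  unfold glue
  rw [if_pos (by simp only [Fin.val_mk]; omega)]
  exact congrArg p.1 (Fin.ext (by show 2 * b.val / 2 = b.val; omega))

lemma glue_odd (k : ℕ) (p : (Fin k → Bool) × (Fin k → Bool)) (b : Fin k)
    (h : 2 * b.val + 1 < 2 * k) : glue k p ⟨2 * b.val + 1, h⟩ = p.2 b := by
  unfold glue
  rw [if_neg (by simp only [Fin.val_mk]; omega)]
  exact congrArg p.2 (Fin.ext (by show (2 * b.val + 1) / 2 = b.val; omega))

open Finset in
/-- The number of colorings of `Fin (2k)` with exactly `n0` black odd numbers and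
exactly `m0` white even numbers is `C(k, n0) * C(k, m0)`. -/
lemma card_filter_and (k n0 m0 : ℕ) :
    (univ.filter (fun c : Fin (2 * k) → Bool =>
      (univ.filter fun x : Fin (2 * k) => (x.val + 1) % 2 = 1 ∧ c x = true).card = n0 ∧
      (univ.filter fun x : Fin (2 * k) => (x.val + 1) % 2 = 0 ∧ c x = false).card = m0)).card
      = k.choose n0 * k.choose m0 := by
  have key : (univ.filter (fun c : Fin (2 * k) → Bool =>
      (univ.filter fun x : Fin (2 * k) => (x.val + 1) % 2 = 1 ∧ c x = true).card = n0 ∧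
      (univ.filter fun x : Fin (2 * k) => (x.val + 1) % 2 = 0 ∧ c x = false).card = m0)).card
      = (univ.filter (fun p : (Fin k → Bool) × (Fin k → Bool) =>
          (univ.filter fun b : Fin k => p.1 b = true).card = n0 ∧
          (univ.filter fun b : Fin k => p.2 b = false).card = m0)).card := by
    apply Finset.card_nbij'
      (fun c => (fun b : Fin k => c ⟨2 * b.val, by omega⟩,
                 fun b : Fin k => c ⟨2 * b.val + 1, by omega⟩))
      (glue k)
    · intro c hc
      simp only [Finset.coe_filter, Set.mem_setOf_eq, Finset.mem_filter, Finset.mem_univ, true_and] at hc ⊢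
      rw [← count_odd k c true, ← count_even k c false]
      exact hc
    · intro p hp
      simp only [Finset.coe_filter, Set.mem_setOf_eq, Finset.mem_filter, Finset.mem_univ, true_and] at hp ⊢
      rw [count_odd, count_even]
      constructor
      · rw [← hp.1]
        congr 1
        apply Finset.filter_congr
        intro b _
        rw [glue_even]
      · rw [← hp.2]
        congr 1
        apply Finset.filter_congr
        intro b _
        rw [glue_odd]
    · intro c _
      funext x
      unfold glue
      by_cases h : x.val % 2 = 0
      · rw [if_pos h]
        exact congrArg c (Fin.ext (by show 2 * (x.val / 2) = x.val; omega))
      · rw [if_neg h]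
        exact congrArg c (Fin.ext (by show 2 * (x.val / 2) + 1 = x.val; omega))
    · intro p _
      apply Prod.ext
      · funext b
        exact glue_even k p b (by omega)
      · funext b
        exact glue_odd k p b (by omega)
  rw [key]
  have hfp := Finset.filter_product
      (s := (univ : Finset (Fin k → Bool))) (t := (univ : Finset (Fin k → Bool)))
      (p := fun c : Fin k → Bool => (univ.filter fun b : Fin k => c b = true).card = n0)
      (q := fun c : Fin k → Bool => (univ.filter fun b : Fin k => c b = false).card = m0)
  rw [← Finset.univ_product_univ, hfp, Finset.card_product, count_bool, count_bool]

/-- The set `D_{j,m,k}` of black/white colorings of `{1,...,2k}` (realized as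
`Fin (2k)`, with `x` standing for the number `x+1`; `c x = true` means black) with
exactly `j` black odd numbers and exactly `m+j` white even numbers. Here `j : ℤ`, so
`D_{j,m,k} = ∅` whenever `j < 0` or `j > k - m`. -/
def Dset (k m : ℕ) (j : ℤ) : Finset (Fin (2 * k) → Bool) :=
  Finset.univ.filter (fun c =>
    ((Finset.univ.filter (fun x : Fin (2 * k) =>
      (x.val + 1) % 2 = 1 ∧ c x = true)).card : ℤ) = j ∧
    ((Finset.univ.filter (fun x : Fin (2 * k) =>
      (x.val + 1) % 2 = 0 ∧ c x = false)).card : ℤ) = (m : ℤ) + j)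

lemma Dset_neg (k m : ℕ) (j : ℤ) (hj : j < 0) : Dset k m j = ∅ := by
  rw [Finset.eq_empty_iff_forall_notMem]
  intro c hc
  rw [Dset, Finset.mem_filter] at hc
  have := hc.2.1
  have : (0 : ℤ) ≤ j := this ▸ Int.natCast_nonneg _
  omega

lemma Dset_card_nat (k m n : ℕ) :
    (Dset k m (n : ℤ)).card = k.choose n * k.choose (m + n) := by
  rw [← card_filter_and k n (m + n)]
  congr 1
  rw [Dset]
  apply Finset.filter_congr
  intro c _
  constructor
  · rintro ⟨h1, h2⟩
    exact ⟨by exact_mod_cast h1, by exact_mod_cast h2⟩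
  · rintro ⟨h1, h2⟩
    exact ⟨by exact_mod_cast h1, by rw [h2]; push_cast; ring⟩

/-- For `m ≥ 1`:
`#D_{j,m,k+1} = #D_{j,m-1,k} + #D_{j-1,m,k} + #D_{j,m,k} + #D_{j-1,m+1,k}`. -/
theorem card_Dset_recurrence (k m : ℕ) (hk : 1 ≤ k) (hm : 1 ≤ m) (hmk : m ≤ k)
    (j : ℤ) :
    (Dset (k + 1) m j).card =
      (Dset k (m - 1) j).card + (Dset k m (j - 1)).card + (Dset k m j).card +
        (Dset k (m + 1) (j - 1)).card := by
  obtain ⟨m', rfl⟩ : ∃ m', m = m' + 1 := ⟨m - 1, by omega⟩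
  rcases lt_trichotomy j 0 with hj | hj | hj
  · rw [Dset_neg _ _ _ hj, Dset_neg _ _ _ hj, Dset_neg _ _ _ (by omega),
      Dset_neg _ _ _ hj, Dset_neg _ _ _ (by omega)]
    simp
  · subst hj
    rw [show (0 : ℤ) = ((0 : ℕ) : ℤ) by norm_cast,
      Dset_neg _ _ (((0:ℕ):ℤ) - 1) (by norm_num),
      Dset_neg _ _ (((0:ℕ):ℤ) - 1) (by norm_num),
      Dset_card_nat, Dset_card_nat, Dset_card_nat]
    simp only [Finset.card_empty, Nat.choose_zero_right, Nat.add_zero, Nat.add_sub_cancel,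
      one_mul, add_zero, zero_add]
    rw [Nat.choose_succ_succ]
  · obtain ⟨n, rfl⟩ : ∃ n : ℕ, j = ((n + 1 : ℕ) : ℤ) := ⟨(j - 1).toNat, by omega⟩
    rw [show ((n + 1 : ℕ) : ℤ) - 1 = ((n : ℕ) : ℤ) by push_cast; ring,
      Dset_card_nat, Dset_card_nat, Dset_card_nat, Dset_card_nat, Dset_card_nat]
    rw [show m' + 1 - 1 + (n + 1) = m' + 1 + n by omega,
      show m' + 1 + (n + 1) = m' + 1 + n + 1 by omega,
      show m' + 1 + 1 + n = m' + 1 + n + 1 by omega,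
      show m' + 1 + n = m' + (n + 1) by omega]
    rw [Nat.choose_succ_succ (k) (n), Nat.choose_succ_succ (k) (m' + (n + 1))]
    ring
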